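/- (Existence of path measures) Let X be a compact Hausdorff space, r : X → X continuous, onto, finite-to-one, and D : X → [0,∞) measurable with ∑_{r(y)=x} D(y) = 1 for all x. Then for each x₀ ∈ X there exists a Radon probability measure P_{x₀} on the path space Ω_{x₀} := {(x₁,x₂,…) : r(x₁)=x₀, r(x_{k+1})=x_k for all k} such that for every bounded measurable f depending only on the first n coordinates, ∫ f dP_{x₀} = ∑_{r^n(x_n)=x₀} D^{(n)}(x_n) f(x₁,…,x_n). -/

import Mathlib

open MeasureTheory

namespace Stmt13Aux

noncomputable section

variable {X : Type*}

/-- The weights `D^{(n)}`. -/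
def W (r : X → X) (D : X → ℝ) (n : ℕ) (y : X) : ℝ := ∏ j ∈ Finset.range n, D (r^[j] y)

theorem W_nonneg (r : X → X) (D : X → ℝ) (hD : ∀ x, 0 ≤ D x) (n : ℕ) (y : X) :
    0 ≤ W r D n y :=
  Finset.prod_nonneg fun _ _ => hD _

theorem W_zero (r : X → X) (D : X → ℝ) (y : X) : W r D 0 y = 1 := by
  simp [W]

theorem W_succ (r : X → X) (D : X → ℝ) (n : ℕ) (y : X) :
    W r D (n + 1) y = W r D n (r y) * D y := by
  rw [W, Finset.prod_range_succ']
  simp only [Function.iterate_succ_apply, Function.iterate_zero_apply, W]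

section Order

variable [LinearOrder X]

def pickP (s : Finset X) (w : X → ℝ) (a t : ℝ) (z : X) : Prop :=
  z ∈ s ∧ a + ∑ u ∈ s.filter (· < z), w u ≤ t ∧ t < a + ∑ u ∈ s.filter (· ≤ z), w u

open Classical in
def pick (x₀ : X) (s : Finset X) (w : X → ℝ) (a t : ℝ) : X :=
  if h : ∃ z, pickP s w a t z then h.choose
  else if h2 : s.Nonempty then h2.choose else x₀

theorem pickP_unique {s : Finset X} {w : X → ℝ} (hw : ∀ u, 0 ≤ w u) {a t : ℝ} {z z' : X}
    (h : pickP s w a t z) (h' : pickP s w a t z') : z = z' := by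
  have key : ∀ {b b' : X}, pickP s w a t b → pickP s w a t b' → b < b' → False := by
    intro b b' hb hb' hlt
    have hsub : s.filter (· ≤ b) ⊆ s.filter (· < b') := by
      intro u hu
      simp only [Finset.mem_filter] at hu ⊢
      exact ⟨hu.1, lt_of_le_of_lt hu.2 hlt⟩
    have hmono := Finset.sum_le_sum_of_subset_of_nonneg hsub (fun u _ _ => hw u)
    have h1 := hb.2.2
    have h2 := hb'.2.1
    linarith
  rcases lt_trichotomy z z' with hlt | heq | hlt
  · exact absurd (key h h' hlt) (fun f => f)
  · exact heq
  · exact absurd (key h' h hlt) (fun f => f)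

theorem pickP_exists {s : Finset X} {w : X → ℝ} (hw : ∀ u, 0 ≤ w u) {a t : ℝ}
    (h1 : a ≤ t) (h2 : t < a + ∑ u ∈ s, w u) : ∃ z, pickP s w a t z := by
  classical
  have hsne : s.Nonempty := by
    rcases Finset.eq_empty_or_nonempty s with rfl | h
    · exfalso; simp only [Finset.sum_empty, add_zero] at h2; linarith
    · exact h
  set B := s.filter (fun z => t < a + ∑ u ∈ s.filter (· ≤ z), w u) with hB
  have hBne : B.Nonempty := by
    refine ⟨s.max' hsne, ?_⟩
    rw [hB, Finset.mem_filter]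
    refine ⟨s.max'_mem hsne, ?_⟩
    have hst : s.filter (· ≤ s.max' hsne) = s :=
      Finset.filter_true_of_mem (fun u hu => s.le_max' u hu)
    rw [hst]; exact h2
  set z₀ := B.min' hBne with hz₀
  have hz₀B : z₀ ∈ B := B.min'_mem hBne
  rw [hB, Finset.mem_filter] at hz₀B
  refine ⟨z₀, hz₀B.1, ?_, hz₀B.2⟩
  by_cases hC : (s.filter (· < z₀)).Nonempty
  · set u' := (s.filter (· < z₀)).max' hC with hu'def
    have hu' : u' ∈ s.filter (· < z₀) := Finset.max'_mem _ hC
    rw [Finset.mem_filter] at hu'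
    have hfe : s.filter (· < z₀) = s.filter (· ≤ u') := by
      ext v
      simp only [Finset.mem_filter]
      constructor
      · rintro ⟨hv, hv2⟩
        exact ⟨hv, (s.filter (· < z₀)).le_max' v (by simp only [Finset.mem_filter]; exact ⟨hv, hv2⟩)⟩
      · rintro ⟨hv, hv2⟩
        exact ⟨hv, lt_of_le_of_lt hv2 hu'.2⟩
    rw [hfe]
    by_contra hlt
    push_neg at hlt
    have hmem : u' ∈ B := by rw [hB, Finset.mem_filter]; exact ⟨hu'.1, hlt⟩
    have := B.min'_le u' hmem
    rw [← hz₀] at this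
    exact absurd hu'.2 (not_lt.2 this)
  · rw [Finset.not_nonempty_iff_eq_empty] at hC
    rw [hC]
    simpa using h1

theorem pick_spec {s : Finset X} {w : X → ℝ} (x₀ : X) (hw : ∀ u, 0 ≤ w u) {a t : ℝ}
    (h1 : a ≤ t) (h2 : t < a + ∑ u ∈ s, w u) : pickP s w a t (pick x₀ s w a t) := by
  have h := pickP_exists hw h1 h2
  rw [pick, dif_pos h]
  exact h.choose_spec

theorem pick_mem {s : Finset X} (x₀ : X) (w : X → ℝ) (a t : ℝ) (hs : s.Nonempty) :
    pick x₀ s w a t ∈ s := by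
  rw [pick]
  split_ifs with h
  · exact h.choose_spec.1
  · exact hs.choose_spec

theorem pick_eq_of_pickP {s : Finset X} {w : X → ℝ} (x₀ : X) (hw : ∀ u, 0 ≤ w u) {a t : ℝ}
    {z : X} (hz : pickP s w a t z) : pick x₀ s w a t = z := by
  have h : ∃ z, pickP s w a t z := ⟨z, hz⟩
  rw [pick, dif_pos h]
  exact pickP_unique hw h.choose_spec hz

end Order

section Meas

theorem measurable_of_finite_range {α γ : Type*} [MeasurableSpace α] [MeasurableSpace γ]
    (f : α → γ) (R : Finset γ) (hR : ∀ t, f t ∈ R)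
    (h : ∀ z ∈ R, MeasurableSet (f ⁻¹' {z})) : Measurable f := by
  intro B hB
  have heq : f ⁻¹' B = ⋃ z ∈ (↑R : Set γ) ∩ B, f ⁻¹' {z} := by
    ext t
    simp only [Set.mem_preimage, Set.mem_iUnion, Set.mem_inter_iff, Set.mem_singleton_iff,
      Finset.mem_coe, exists_prop]
    constructor
    · intro ht; exact ⟨f t, ⟨hR t, ht⟩, rfl⟩
    · rintro ⟨z, ⟨hz, hzB⟩, hfz⟩; rw [hfz]; exact hzB
  rw [heq]
  exact MeasurableSet.biUnion ((R.finite_toSet.inter_of_left B).countable)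
    (fun z hz => h z (Finset.mem_coe.1 hz.1))

theorem measurable_comp_finite_range {α γ δ : Type*} [MeasurableSpace α] [MeasurableSpace γ]
    [MeasurableSpace δ] [MeasurableSingletonClass γ]
    (φ : α → γ) (V : Finset γ) (hV : ∀ t, φ t ∈ V) (hφ : Measurable φ) (f : γ → δ) :
    Measurable (fun t => f (φ t)) := by
  classical
  apply measurable_of_finite_range _ (V.image f) (fun t => Finset.mem_image_of_mem f (hV t))
  intro z _
  have heq : (fun t => f (φ t)) ⁻¹' {z} = ⋃ v ∈ (↑V : Set γ) ∩ f ⁻¹' {z}, φ ⁻¹' {v} := by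
    ext t
    simp only [Set.mem_preimage, Set.mem_iUnion, Set.mem_inter_iff, Set.mem_singleton_iff,
      Finset.mem_coe, exists_prop]
    constructor
    · intro ht; exact ⟨φ t, ⟨hV t, ht⟩, rfl⟩
    · rintro ⟨v, ⟨hv, hvz⟩, hfv⟩; rw [hfv]; exact hvz
  rw [heq]
  exact MeasurableSet.biUnion ((V.finite_toSet.inter_of_left _).countable)
    (fun v _ => hφ (measurableSet_singleton v))

variable [LinearOrder X]

theorem pickP_iff_Ico {s : Finset X} {w : X → ℝ} {a t : ℝ} {z : X} (hz : z ∈ s) :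
    pickP s w a t z ↔ t ∈ Set.Ico (a + ∑ u ∈ s.filter (· < z), w u)
      (a + ∑ u ∈ s.filter (· ≤ z), w u) := by
  simp [pickP, hz, Set.mem_Ico]

theorem pick_measurable [MeasurableSpace X] (x₀ : X) (s : Finset X) (w : X → ℝ) (a : ℝ)
    (hw : ∀ u, 0 ≤ w u) : Measurable (pick x₀ s w a) := by
  classical
  have hAeq : ∀ z : X, {t : ℝ | pickP s w a t z} =
      if z ∈ s then Set.Ico (a + ∑ u ∈ s.filter (· < z), w u)
        (a + ∑ u ∈ s.filter (· ≤ z), w u) else ∅ := by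
    intro z
    by_cases hz : z ∈ s
    · rw [if_pos hz]; ext t; exact pickP_iff_Ico hz
    · rw [if_neg hz]; ext t; simp [pickP, hz]
  have hAmeas : ∀ z : X, MeasurableSet {t : ℝ | pickP s w a t z} := by
    intro z
    rw [hAeq z]
    split_ifs
    · exact measurableSet_Ico
    · exact MeasurableSet.empty
  set E := {t : ℝ | ∃ z, pickP s w a t z} with hE
  have hEeq : E = ⋃ z ∈ (↑s : Set X), {t : ℝ | pickP s w a t z} := by
    ext t
    simp only [hE, Set.mem_setOf_eq, Set.mem_iUnion, Finset.mem_coe, exists_prop]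
    constructor
    · rintro ⟨z, hz⟩; exact ⟨z, hz.1, hz⟩
    · rintro ⟨z, _, hz⟩; exact ⟨z, hz⟩
  have hEmeas : MeasurableSet E := by
    rw [hEeq]
    exact MeasurableSet.biUnion s.finite_toSet.countable (fun z _ => hAmeas z)
  set j : X := if h2 : s.Nonempty then h2.choose else x₀ with hj
  have hpick_off : ∀ t, t ∉ E → pick x₀ s w a t = j := by
    intro t ht
    rw [pick]
    exact dif_neg ht
  have hpick_on : ∀ t, t ∈ E → pickP s w a t (pick x₀ s w a t) := by
    intro t ht
    have h' : ∃ z, pickP s w a t z := ht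
    rw [pick, dif_pos h']
    exact h'.choose_spec
  apply measurable_of_finite_range _ (insert x₀ s)
  · intro t
    by_cases ht : t ∈ E
    · exact Finset.mem_insert_of_mem (hpick_on t ht).1
    · rw [hpick_off t ht, hj]
      split_ifs with h2
      · exact Finset.mem_insert_of_mem h2.choose_spec
      · exact Finset.mem_insert_self _ _
  · intro z _
    have heq : pick x₀ s w a ⁻¹' {z} =
        (E ∩ {t | pickP s w a t z}) ∪ (Eᶜ ∩ (if j = z then Set.univ else ∅)) := by
      ext t
      simp only [Set.mem_preimage, Set.mem_singleton_iff, Set.mem_union, Set.mem_inter_iff,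
        Set.mem_compl_iff, Set.mem_setOf_eq]
      constructor
      · intro hpz
        by_cases ht : t ∈ E
        · left; refine ⟨ht, ?_⟩; rw [← hpz]; exact hpick_on t ht
        · right
          refine ⟨ht, ?_⟩
          rw [if_pos (by rw [← hpz, hpick_off t ht])]
          exact Set.mem_univ t
      · rintro (⟨ht, hpp⟩ | ⟨ht, hjz⟩)
        · exact pickP_unique hw (hpick_on t ht) hpp
        · split_ifs at hjz with hjz'
          · rw [hpick_off t ht]; exact hjz'
          · exact absurd hjz (Set.notMem_empty t)
    rw [heq]
    refine (hEmeas.inter (hAmeas z)).union (hEmeas.compl.inter ?_)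
    split_ifs
    · exact MeasurableSet.univ
    · exact MeasurableSet.empty

end Meas

section Order2
variable [LinearOrder X]

theorem pick_mem_insert (x₀ : X) (s : Finset X) (w : X → ℝ) (a t : ℝ) :
    pick x₀ s w a t ∈ insert x₀ s := by
  rw [pick]
  split_ifs with h h2
  · exact Finset.mem_insert_of_mem h.choose_spec.1
  · exact Finset.mem_insert_of_mem h2.choose_spec
  · exact Finset.mem_insert_self _ _

theorem filter_le_eq_insert {s : Finset X} {z : X} (hz : z ∈ s) :
    s.filter (· ≤ z) = insert z (s.filter (· < z)) := by
  ext v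
  simp only [Finset.mem_filter, Finset.mem_insert]
  constructor
  · rintro ⟨hv, hvle⟩
    rcases lt_or_eq_of_le hvle with h | h
    · exact Or.inr ⟨hv, h⟩
    · exact Or.inl h
  · rintro (rfl | ⟨hv, hvlt⟩)
    · exact ⟨hz, le_refl _⟩
    · exact ⟨hv, le_of_lt hvlt⟩

theorem sum_filter_le_eq {s : Finset X} {z : X} (hz : z ∈ s) (w : X → ℝ) :
    ∑ u ∈ s.filter (· ≤ z), w u = (∑ u ∈ s.filter (· < z), w u) + w z := by
  rw [filter_le_eq_insert hz, Finset.sum_insert (by simp)]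
  ring

end Order2

section Psi

variable [LinearOrder X] [MeasurableSpace X]
variable (r : X → X) (D : X → ℝ) (hfin : ∀ x, (r ⁻¹' {x}).Finite) (x₀ : X)

def psi : ℕ → ℝ → X × ℝ
  | 0, _ => (x₀, 0)
  | n + 1, t =>
    let p := psi n t
    let s := (hfin p.1).toFinset
    let z := pick x₀ s (W r D (n + 1)) p.2 t
    (z, p.2 + ∑ u ∈ s.filter (· < z), W r D (n + 1) u)

theorem psi_zero (t : ℝ) : psi r D hfin x₀ 0 t = (x₀, 0) := rfl

theorem psi_succ (n : ℕ) (t : ℝ) :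
    psi r D hfin x₀ (n + 1) t =
      (pick x₀ ((hfin (psi r D hfin x₀ n t).1).toFinset) (W r D (n + 1))
          (psi r D hfin x₀ n t).2 t,
        (psi r D hfin x₀ n t).2 +
          ∑ u ∈ ((hfin (psi r D hfin x₀ n t).1).toFinset).filter
            (· < pick x₀ ((hfin (psi r D hfin x₀ n t).1).toFinset) (W r D (n + 1))
              (psi r D hfin x₀ n t).2 t), W r D (n + 1) u) := rfl

theorem fiber_nonempty (hsurj : Function.Surjective r) (y : X) :
    ((hfin y).toFinset).Nonempty := by
  obtain ⟨z, hz⟩ := hsurj y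
  exact ⟨z, by simp [Set.Finite.mem_toFinset, Set.mem_preimage, hz]⟩

theorem mem_fiber_iff {y z : X} : z ∈ (hfin y).toFinset ↔ r z = y := by
  simp [Set.Finite.mem_toFinset]

theorem psi_fst_r (hsurj : Function.Surjective r) (n : ℕ) (t : ℝ) :
    r ((psi r D hfin x₀ (n + 1) t).1) = (psi r D hfin x₀ n t).1 := by
  rw [psi_succ]
  have h := pick_mem x₀ (W r D (n + 1)) (psi r D hfin x₀ n t).2 t
    (fiber_nonempty r hfin hsurj (psi r D hfin x₀ n t).1)
  rw [mem_fiber_iff] at h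
  exact h

theorem psi_iter (hsurj : Function.Surjective r) (n : ℕ) (t : ℝ) :
    r^[n] ((psi r D hfin x₀ n t).1) = x₀ := by
  induction n with
  | zero => rfl
  | succ n ih =>
    rw [Function.iterate_succ_apply, psi_fst_r r D hfin x₀ hsurj n t]
    exact ih

theorem psi_range (n : ℕ) : ∃ V : Finset (X × ℝ), ∀ t, psi r D hfin x₀ n t ∈ V := by
  classical
  induction n with
  | zero => exact ⟨{(x₀, 0)}, fun t => by simp [psi_zero]⟩
  | succ n ih =>
    obtain ⟨V, hV⟩ := ih
    refine ⟨V.biUnion (fun v => (insert x₀ ((hfin v.1).toFinset)).image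
      (fun z => (z, v.2 + ∑ u ∈ ((hfin v.1).toFinset).filter (· < z), W r D (n + 1) u))), ?_⟩
    intro t
    rw [Finset.mem_biUnion]
    refine ⟨psi r D hfin x₀ n t, hV t, ?_⟩
    rw [Finset.mem_image]
    exact ⟨pick x₀ ((hfin (psi r D hfin x₀ n t).1).toFinset) (W r D (n + 1))
      (psi r D hfin x₀ n t).2 t, pick_mem_insert _ _ _ _ _, (psi_succ r D hfin x₀ n t).symm⟩

theorem measurable_bind_finite {α γ δ : Type*} [MeasurableSpace α] [MeasurableSpace γ]
    [MeasurableSpace δ] [MeasurableSingletonClass γ]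
    (φ : α → γ) (V : Finset γ) (hV : ∀ t, φ t ∈ V) (hφ : Measurable φ)
    (G : γ → α → δ) (hG : ∀ v, Measurable (G v)) :
    Measurable (fun t => G (φ t) t) := by
  intro B hB
  have heq : (fun t => G (φ t) t) ⁻¹' B = ⋃ v ∈ (↑V : Set γ), (φ ⁻¹' {v} ∩ G v ⁻¹' B) := by
    ext t
    simp only [Set.mem_preimage, Set.mem_iUnion, Set.mem_inter_iff, Set.mem_singleton_iff,
      Finset.mem_coe, exists_prop]
    constructor
    · intro ht; exact ⟨φ t, hV t, rfl, ht⟩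
    · rintro ⟨v, _, hfv, hvB⟩; rw [← hfv] at hvB; exact hvB
  rw [heq]
  exact MeasurableSet.biUnion V.finite_toSet.countable
    (fun v _ => (hφ (measurableSet_singleton v)).inter (hG v hB))

theorem psi_measurable [MeasurableSingletonClass X] (hDpos : ∀ x, 0 ≤ D x) (n : ℕ) :
    Measurable (psi r D hfin x₀ n) := by
  induction n with
  | zero => exact measurable_const
  | succ n ih =>
    obtain ⟨V, hV⟩ := psi_range r D hfin x₀ n
    have : (psi r D hfin x₀ (n + 1)) = fun t =>
        (fun (v : X × ℝ) (u : ℝ) =>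
          (pick x₀ ((hfin v.1).toFinset) (W r D (n + 1)) v.2 u,
            v.2 + ∑ w ∈ ((hfin v.1).toFinset).filter
              (· < pick x₀ ((hfin v.1).toFinset) (W r D (n + 1)) v.2 u), W r D (n + 1) w))
          (psi r D hfin x₀ n t) t := by
      funext t
      exact psi_succ r D hfin x₀ n t
    rw [this]
    refine measurable_bind_finite _ V hV ih
      (fun (v : X × ℝ) (u : ℝ) =>
        (pick x₀ ((hfin v.1).toFinset) (W r D (n + 1)) v.2 u,
          v.2 + ∑ w ∈ ((hfin v.1).toFinset).filter
            (· < pick x₀ ((hfin v.1).toFinset) (W r D (n + 1)) v.2 u), W r D (n + 1) w)) ?_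
    intro v
    exact measurable_comp_finite_range
      (pick x₀ ((hfin v.1).toFinset) (W r D (n + 1)) v.2)
      (insert x₀ ((hfin v.1).toFinset)) (pick_mem_insert _ _ _ _)
      (pick_measurable x₀ _ _ _ (fun u => W_nonneg r D hDpos (n + 1) u))
      (fun z => (z, v.2 + ∑ w ∈ ((hfin v.1).toFinset).filter (· < z), W r D (n + 1) w))

theorem W_fiber_sum (hD1' : ∀ x, ∑ u ∈ (hfin x).toFinset, D u = 1) (n : ℕ) (y : X) :
    ∑ u ∈ (hfin y).toFinset, W r D (n + 1) u = W r D n y := by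
  have h : ∀ u ∈ (hfin y).toFinset, W r D (n + 1) u = W r D n y * D u := by
    intro u hu
    rw [mem_fiber_iff] at hu
    rw [W_succ, hu]
  rw [Finset.sum_congr rfl h, ← Finset.mul_sum, hD1', mul_one]

theorem psi_main (hsurj : Function.Surjective r) (hDpos : ∀ x, 0 ≤ D x)
    (hD1' : ∀ x, ∑ u ∈ (hfin x).toFinset, D u = 1) (n : ℕ) :
    ∀ t ∈ Set.Ico (0:ℝ) 1,
      ({u | u ∈ Set.Ico (0:ℝ) 1 ∧ psi r D hfin x₀ n u = psi r D hfin x₀ n t}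
        = Set.Ico (psi r D hfin x₀ n t).2
            ((psi r D hfin x₀ n t).2 + W r D n (psi r D hfin x₀ n t).1)) ∧
      (∀ u ∈ Set.Ico (0:ℝ) 1, (psi r D hfin x₀ n u).1 = (psi r D hfin x₀ n t).1 →
        psi r D hfin x₀ n u = psi r D hfin x₀ n t) := by
  induction n with
  | zero =>
    intro t ht
    constructor
    · ext u
      simp [psi_zero, W_zero, Set.mem_Ico]
    · intro u hu _
      simp [psi_zero]
  | succ n ih =>
    intro t ht
    obtain ⟨hset, hinj⟩ := ih t ht
    set p := psi r D hfin x₀ n t with hp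
    set s := (hfin p.1).toFinset with hs
    set wn1 := W r D (n + 1) with hwn1
    have hw : ∀ u, 0 ≤ wn1 u := fun u => W_nonneg r D hDpos (n + 1) u
    have htotal : ∑ u ∈ s, wn1 u = W r D n p.1 := W_fiber_sum r D hfin hD1' n p.1
    have htmem : t ∈ Set.Ico p.2 (p.2 + W r D n p.1) := by
      rw [← hset]; exact ⟨ht, rfl⟩
    have hps : pickP s wn1 p.2 t (pick x₀ s wn1 p.2 t) :=
      pick_spec x₀ hw htmem.1 (by rw [htotal]; exact htmem.2)
    set z := pick x₀ s wn1 p.2 t with hzdef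
    set L := p.2 + ∑ u ∈ s.filter (· < z), wn1 u with hL
    have hψt : psi r D hfin x₀ (n + 1) t = (z, L) := psi_succ r D hfin x₀ n t
    have hzs : z ∈ s := hps.1
    have hRL : p.2 + ∑ u ∈ s.filter (· ≤ z), wn1 u = L + wn1 z := by
      rw [sum_filter_le_eq hzs, hL]; ring
    have haL : p.2 ≤ L := by
      rw [hL]
      have h0 : 0 ≤ ∑ u ∈ s.filter (· < z), wn1 u := Finset.sum_nonneg (fun u _ => hw u)
      linarith
    have hRtot : L + wn1 z ≤ p.2 + W r D n p.1 := by
      rw [← hRL, ← htotal]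
      have h0 := Finset.sum_le_sum_of_subset_of_nonneg (Finset.filter_subset (· ≤ z) s)
        (fun u _ _ => hw u)
      linarith
    have hIco_sub : Set.Ico L (L + wn1 z) ⊆ Set.Ico p.2 (p.2 + W r D n p.1) := by
      intro u hu
      exact ⟨le_trans haL hu.1, lt_of_lt_of_le hu.2 hRtot⟩
    have hmemIco : ∀ u ∈ Set.Ico L (L + wn1 z),
        u ∈ Set.Ico (0:ℝ) 1 ∧ psi r D hfin x₀ n u = p ∧
          psi r D hfin x₀ (n + 1) u = (z, L) := by
      intro u hu
      have hu2 : u ∈ Set.Ico p.2 (p.2 + W r D n p.1) := hIco_sub hu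
      rw [← hset] at hu2
      obtain ⟨hu01, hψnu⟩ := hu2
      refine ⟨hu01, hψnu, ?_⟩
      rw [psi_succ, hψnu]
      have hppu : pickP s wn1 p.2 u z := ⟨hzs, hu.1, by rw [hRL]; exact hu.2⟩
      rw [pick_eq_of_pickP x₀ hw hppu, ← hL]
    have hsame : ∀ u ∈ Set.Ico (0:ℝ) 1, (psi r D hfin x₀ (n + 1) u).1 = z →
        psi r D hfin x₀ (n + 1) u = (z, L) := by
      intro u hu01 hfst
      have hru : r ((psi r D hfin x₀ (n + 1) u).1) = (psi r D hfin x₀ n u).1 :=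
        psi_fst_r r D hfin x₀ hsurj n u
      have hrz : r z = p.1 := (mem_fiber_iff r hfin).1 hzs
      have hfst_n : (psi r D hfin x₀ n u).1 = p.1 := by
        rw [← hru, hfst, hrz]
      have hψnu : psi r D hfin x₀ n u = p := hinj u hu01 hfst_n
      have h2 := psi_succ r D hfin x₀ n u
      rw [hψnu] at h2
      rw [h2] at hfst
      have hpick : pick x₀ s wn1 p.2 u = z := hfst
      rw [h2, hpick, ← hL]
    constructor
    · rw [hψt]
      ext u
      simp only [Set.mem_setOf_eq]
      constructor
      · rintro ⟨hu01, hequ⟩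
        have hfst : (psi r D hfin x₀ (n + 1) u).1 = z := by rw [hequ]
        have hru : r ((psi r D hfin x₀ (n + 1) u).1) = (psi r D hfin x₀ n u).1 :=
          psi_fst_r r D hfin x₀ hsurj n u
        have hrz : r z = p.1 := (mem_fiber_iff r hfin).1 hzs
        have hfst_n : (psi r D hfin x₀ n u).1 = p.1 := by rw [← hru, hfst, hrz]
        have hψnu : psi r D hfin x₀ n u = p := hinj u hu01 hfst_n
        have humem : u ∈ Set.Ico p.2 (p.2 + W r D n p.1) := by
          rw [← hset]; exact ⟨hu01, hψnu⟩
        have hpsu : pickP s wn1 p.2 u (pick x₀ s wn1 p.2 u) :=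
          pick_spec x₀ hw humem.1 (by rw [htotal]; exact humem.2)
        have hpicku : pick x₀ s wn1 p.2 u = z := by
          have h2 := psi_succ r D hfin x₀ n u
          rw [hψnu] at h2
          rw [h2] at hfst
          exact hfst
        rw [hpicku] at hpsu
        exact ⟨hpsu.2.1, hRL ▸ hpsu.2.2⟩
      · intro hu
        obtain ⟨hu01, _, hψu⟩ := hmemIco u hu
        exact ⟨hu01, hψu⟩
    · intro u hu01 hfst
      rw [hψt] at hfst ⊢
      exact hsame u hu01 hfst

theorem psi_attained (hsurj : Function.Surjective r) (hDpos : ∀ x, 0 ≤ D x)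
    (hD1' : ∀ x, ∑ u ∈ (hfin x).toFinset, D u = 1) :
    ∀ n y, r^[n] y = x₀ → 0 < W r D n y →
      ∃ t ∈ Set.Ico (0:ℝ) 1, (psi r D hfin x₀ n t).1 = y := by
  intro n
  induction n with
  | zero =>
    intro y hy _
    refine ⟨0, ⟨le_refl 0, zero_lt_one⟩, ?_⟩
    rw [psi_zero]
    simp only [Function.iterate_zero, id_eq] at hy
    exact hy.symm
  | succ n ih =>
    intro y hy hW
    rw [W_succ] at hW
    have hWn : 0 ≤ W r D n (r y) := W_nonneg r D hDpos n (r y)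
    have h1 : 0 < W r D n (r y) := by
      rcases hWn.lt_or_eq with h | h
      · exact h
      · exfalso; rw [← h, zero_mul] at hW; exact lt_irrefl 0 hW
    have h2 : 0 < D y := by
      rcases (hDpos y).lt_or_eq with h | h
      · exact h
      · exfalso; rw [← h, mul_zero] at hW; exact lt_irrefl 0 hW
    have hy' : r^[n] (r y) = x₀ := by rw [← Function.iterate_succ_apply]; exact hy
    obtain ⟨t₀, ht₀, hfst⟩ := ih (r y) hy' h1
    obtain ⟨hset, hinj⟩ := psi_main r D hfin x₀ hsurj hDpos hD1' n t₀ ht₀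
    set p := psi r D hfin x₀ n t₀ with hp
    set s := (hfin p.1).toFinset with hs
    set wn1 := W r D (n + 1) with hwn1def
    have hw : ∀ u, 0 ≤ wn1 u := fun u => W_nonneg r D hDpos (n + 1) u
    have hys : y ∈ s := by rw [hs, mem_fiber_iff, hfst]
    have htotal : ∑ u ∈ s, wn1 u = W r D n p.1 := W_fiber_sum r D hfin hD1' n p.1
    set L := p.2 + ∑ u ∈ s.filter (· < y), wn1 u with hLdef
    have hwn1y : 0 < wn1 y := by
      rw [hwn1def, W_succ]
      exact mul_pos h1 h2
    have haL : p.2 ≤ L := by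
      rw [hLdef]
      have h0 : 0 ≤ ∑ u ∈ s.filter (· < y), wn1 u := Finset.sum_nonneg (fun u _ => hw u)
      linarith
    have hL_lt : L + wn1 y ≤ p.2 + W r D n p.1 := by
      rw [← htotal]
      have heq : ∑ u ∈ s.filter (· ≤ y), wn1 u
          = (∑ u ∈ s.filter (· < y), wn1 u) + wn1 y := sum_filter_le_eq hys wn1
      have h0 := Finset.sum_le_sum_of_subset_of_nonneg (Finset.filter_subset (· ≤ y) s)
        (fun u _ _ => hw u)
      rw [hLdef]
      linarith
    have htmem : L ∈ Set.Ico p.2 (p.2 + W r D n p.1) := by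
      refine ⟨haL, ?_⟩
      have hx : L < L + wn1 y := by linarith
      exact lt_of_lt_of_le hx hL_lt
    rw [← hset] at htmem
    obtain ⟨hL01, hψL⟩ := htmem
    refine ⟨L, hL01, ?_⟩
    rw [psi_succ, hψL]
    show pick x₀ s wn1 p.2 L = y
    apply pick_eq_of_pickP x₀ hw
    refine ⟨hys, le_of_eq hLdef.symm, ?_⟩
    rw [sum_filter_le_eq hys wn1]
    rw [hLdef]
    linarith

theorem psi_volume (hsurj : Function.Surjective r) (hDpos : ∀ x, 0 ≤ D x)
    (hD1' : ∀ x, ∑ u ∈ (hfin x).toFinset, D u = 1) (n : ℕ) (y : X) (hy : r^[n] y = x₀) :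
    MeasureTheory.volume (Set.Ico (0:ℝ) 1 ∩ (fun u => (psi r D hfin x₀ n u).1) ⁻¹' {y})
      = ENNReal.ofReal (W r D n y) := by
  by_cases hatt : ∃ t ∈ Set.Ico (0:ℝ) 1, (psi r D hfin x₀ n t).1 = y
  · obtain ⟨t, ht01, hty⟩ := hatt
    obtain ⟨hset, hinj⟩ := psi_main r D hfin x₀ hsurj hDpos hD1' n t ht01
    have hseteq : Set.Ico (0:ℝ) 1 ∩ (fun u => (psi r D hfin x₀ n u).1) ⁻¹' {y}
        = {u | u ∈ Set.Ico (0:ℝ) 1 ∧ psi r D hfin x₀ n u = psi r D hfin x₀ n t} := by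
      ext u
      simp only [Set.mem_inter_iff, Set.mem_preimage, Set.mem_singleton_iff, Set.mem_setOf_eq]
      constructor
      · rintro ⟨hu01, hfst⟩
        exact ⟨hu01, hinj u hu01 (by rw [hfst, ← hty])⟩
      · rintro ⟨hu01, hequ⟩
        exact ⟨hu01, by rw [hequ, hty]⟩
    rw [hseteq, hset, Real.volume_Ico, ← hty]
    congr 1
    ring
  · push_neg at hatt
    have hempty : Set.Ico (0:ℝ) 1 ∩ (fun u => (psi r D hfin x₀ n u).1) ⁻¹' {y} = ∅ := by
      ext u
      simp only [Set.mem_inter_iff, Set.mem_preimage, Set.mem_singleton_iff,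
        Set.mem_empty_iff_false, iff_false, not_and]
      exact fun h1 => hatt u h1
    have hW0 : W r D n y = 0 := by
      by_contra h
      obtain ⟨t, ht, hty⟩ := psi_attained r D hfin x₀ hsurj hDpos hD1' n y hy
        (lt_of_le_of_ne (W_nonneg r D hDpos n y) (Ne.symm h))
      exact hatt t ht hty
    rw [hempty, hW0]
    simp


end Psi

theorem fib_finite {X : Type*} (r : X → X) (hfin : ∀ x, (r ⁻¹' {x}).Finite) (x₀ : X) :
    ∀ n : ℕ, ((r^[n]) ⁻¹' {x₀}).Finite := by
  intro n
  induction n with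
  | zero =>
    simp only [Function.iterate_zero, Set.preimage_id]
    exact Set.finite_singleton x₀
  | succ n ih =>
    rw [Function.iterate_succ, Set.preimage_comp]
    have heq : r ⁻¹' ((r^[n]) ⁻¹' {x₀}) = ⋃ z ∈ (r^[n]) ⁻¹' {x₀}, r ⁻¹' {z} := by
      ext u; simp
    rw [heq]
    exact Set.Finite.biUnion ih (fun z _ => hfin z)


section Topology

variable {X : Type*} [TopologicalSpace X] [T2Space X]
variable (r : X → X) (x₀ : X)

theorem omega_mem_fib (ω : {ω : ℕ → X // r (ω 0) = x₀ ∧ ∀ k, r (ω (k + 1)) = ω k}) (k : ℕ) :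
    ω.1 k ∈ (r^[k + 1]) ⁻¹' {x₀} := by
  induction k with
  | zero =>
    simp only [Set.mem_preimage, Set.mem_singleton_iff, Function.iterate_one]
    exact ω.2.1
  | succ k ih =>
    simp only [Set.mem_preimage, Set.mem_singleton_iff] at ih ⊢
    rw [Function.iterate_succ_apply, ω.2.2 k]
    exact ih

def cylSet : Set (Set {ω : ℕ → X // r (ω 0) = x₀ ∧ ∀ k, r (ω (k + 1)) = ω k}) :=
  ⋃ k : ℕ, (fun y => {ω : {ω : ℕ → X // r (ω 0) = x₀ ∧ ∀ k, r (ω (k + 1)) = ω k} | ω.1 k = y}) ''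
    ((r^[k + 1]) ⁻¹' {x₀})

theorem cylSet_countable (hfin : ∀ x, (r ⁻¹' {x}).Finite) : (cylSet r x₀).Countable :=
  Set.countable_iUnion fun k => ((fib_finite r hfin x₀ (k + 1)).image _).countable

theorem topology_eq (hrc : Continuous r) (hfin : ∀ x, (r ⁻¹' {x}).Finite) :
    (instTopologicalSpaceSubtype :
        TopologicalSpace {ω : ℕ → X // r (ω 0) = x₀ ∧ ∀ k, r (ω (k + 1)) = ω k})
      = .generateFrom (cylSet r x₀) := by
  apply le_antisymm
  · rw [TopologicalSpace.le_generateFrom_iff_subset_isOpen]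
    rintro S hS
    simp only [cylSet, Set.mem_iUnion, Set.mem_image] at hS
    obtain ⟨k, y, hy, rfl⟩ := hS
    have hfinset : (((r^[k + 1]) ⁻¹' {x₀}) \ {y}).Finite :=
      (fib_finite r hfin x₀ (k + 1)).diff
    have hUopen : IsOpen ((((r^[k + 1]) ⁻¹' {x₀}) \ {y})ᶜ) := hfinset.isClosed.isOpen_compl
    have hEq : {ω : {ω : ℕ → X // r (ω 0) = x₀ ∧ ∀ k, r (ω (k + 1)) = ω k} | ω.1 k = y}
        = (fun ω : {ω : ℕ → X // r (ω 0) = x₀ ∧ ∀ k, r (ω (k + 1)) = ω k} => ω.1 k) ⁻¹'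
          ((((r^[k + 1]) ⁻¹' {x₀}) \ {y})ᶜ) := by
      ext ω
      simp only [Set.mem_setOf_eq, Set.mem_preimage, Set.mem_compl_iff, Set.mem_diff,
        Set.mem_singleton_iff, not_and, not_not]
      constructor
      · intro h _; exact h
      · intro h; exact h (omega_mem_fib r x₀ ω k)
    rw [hEq]
    exact ((continuous_apply k).comp continuous_subtype_val).isOpen_preimage _ hUopen
  · have hsub : (instTopologicalSpaceSubtype :
        TopologicalSpace {ω : ℕ → X // r (ω 0) = x₀ ∧ ∀ k, r (ω (k + 1)) = ω k})
        = ⨅ k : ℕ, TopologicalSpace.induced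
            (fun ω : {ω : ℕ → X // r (ω 0) = x₀ ∧ ∀ k, r (ω (k + 1)) = ω k} => ω.1 k)
            inferInstance := by
      have h1 : (instTopologicalSpaceSubtype :
          TopologicalSpace {ω : ℕ → X // r (ω 0) = x₀ ∧ ∀ k, r (ω (k + 1)) = ω k})
          = TopologicalSpace.induced
              (Subtype.val : {ω : ℕ → X // r (ω 0) = x₀ ∧ ∀ k, r (ω (k + 1)) = ω k} → ℕ → X)
              (⨅ k : ℕ, TopologicalSpace.induced (fun f : ℕ → X => f k) inferInstance) := rfl
      rw [h1, induced_iInf]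
      exact iInf_congr fun k => induced_compose
    rw [hsub]
    refine le_iInf fun k => ?_
    rw [← continuous_iff_le_induced]
    rw [continuous_def]
    intro U hU
    have hEq : (fun ω : {ω : ℕ → X // r (ω 0) = x₀ ∧ ∀ k, r (ω (k + 1)) = ω k} => ω.1 k) ⁻¹' U
        = ⋃ y ∈ ((r^[k + 1]) ⁻¹' {x₀}) ∩ U,
            {ω : {ω : ℕ → X // r (ω 0) = x₀ ∧ ∀ k, r (ω (k + 1)) = ω k} | ω.1 k = y} := by
      ext ω
      simp only [Set.mem_preimage, Set.mem_iUnion, Set.mem_inter_iff, Set.mem_setOf_eq,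
        exists_prop]
      constructor
      · intro h; exact ⟨ω.1 k, ⟨omega_mem_fib r x₀ ω k, h⟩, rfl⟩
      · rintro ⟨y, ⟨_, hyU⟩, hky⟩; rw [hky]; exact hyU
    rw [hEq]
    letI : TopologicalSpace {ω : ℕ → X // r (ω 0) = x₀ ∧ ∀ k, r (ω (k + 1)) = ω k} :=
      TopologicalSpace.generateFrom (cylSet r x₀)
    apply isOpen_biUnion
    intro y hy
    apply TopologicalSpace.isOpen_generateFrom_of_mem
    simp only [cylSet, Set.mem_iUnion, Set.mem_image]
    exact ⟨k, y, hy.1, rfl⟩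

end Topology

end

end Stmt13Aux

open Stmt13Aux in
/-- Existence of path measures: X compact Hausdorff, r continuous, onto,
finite-to-one, D ≥ 0 with ∑_{r(y)=x} D(y) = 1 for all x. For each x₀ there is a Radon
(regular) probability measure P_{x₀} on Ω_{x₀} = {(x₁,x₂,…) : r(x₁)=x₀, r(x_{k+1})=x_k}
with ∫ f dP_{x₀} = ∑_{rⁿ(xₙ)=x₀} D⁽ⁿ⁾(xₙ) f(x₁,…,xₙ) for every bounded measurable f
depending only on the first n coordinates (equivalently, f = g ∘ (n-th coordinate)). -/
theorem stmt13 {X : Type*} [TopologicalSpace X] [CompactSpace X] [T2Space X]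
    [MeasurableSpace X] [BorelSpace X]
    (r : X → X) (hrc : Continuous r) (hsurj : Function.Surjective r)
    (hfin : ∀ x, (r ⁻¹' {x}).Finite)
    (D : X → ℝ) (hDm : Measurable D) (hDpos : ∀ x, 0 ≤ D x)
    (hD1 : ∀ x, ∑ᶠ y ∈ r ⁻¹' {x}, D y = 1) (x₀ : X) :
    ∃ P : Measure {ω : ℕ → X // r (ω 0) = x₀ ∧ ∀ k, r (ω (k + 1)) = ω k},
      P.Regular ∧ IsProbabilityMeasure P ∧
      ∀ n : ℕ, 1 ≤ n → ∀ g : X → ℝ, Measurable g → (∃ C, ∀ x, |g x| ≤ C) →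
        ∫ ω, g (ω.1 (n - 1)) ∂P =
          ∑ᶠ y ∈ (r^[n]) ⁻¹' {x₀}, (∏ j ∈ Finset.range n, D (r^[j] y)) * g y := by
  classical
  letI : LinearOrder X := IsWellOrder.linearOrder WellOrderingRel
  -- Finset form of the normalization hypothesis
  have hD1' : ∀ x, ∑ u ∈ (hfin x).toFinset, D u = 1 := by
    intro x
    rw [← finsum_mem_eq_finite_toFinset_sum (fun y => D y) (hfin x)]
    exact hD1 x
  -- topological instances on the path space
  haveI hcs : CompactSpace {ω : ℕ → X // r (ω 0) = x₀ ∧ ∀ k, r (ω (k + 1)) = ω k} := by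
    have h1 : IsClosed {ω : ℕ → X | r (ω 0) = x₀} :=
      isClosed_eq (hrc.comp (continuous_apply 0)) continuous_const
    have h2 : IsClosed {ω : ℕ → X | ∀ k, r (ω (k + 1)) = ω k} := by
      have heq : {ω : ℕ → X | ∀ k, r (ω (k + 1)) = ω k}
          = ⋂ k, {ω : ℕ → X | r (ω (k + 1)) = ω k} := by
        ext ω; simp [Set.mem_iInter]
      rw [heq]
      exact isClosed_iInter fun k =>
        isClosed_eq (hrc.comp (continuous_apply (k + 1))) (continuous_apply k)
    exact isCompact_iff_compactSpace.mp (h1.inter h2).isCompact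
  haveI hsc : SecondCountableTopology {ω : ℕ → X // r (ω 0) = x₀ ∧ ∀ k, r (ω (k + 1)) = ω k} :=
    ⟨⟨cylSet r x₀, cylSet_countable r x₀ hfin, topology_eq r x₀ hrc hfin⟩⟩
  haveI hbs : BorelSpace {ω : ℕ → X // r (ω 0) = x₀ ∧ ∀ k, r (ω (k + 1)) = ω k} := by
    constructor
    apply le_antisymm
    · have hval : @Measurable {ω : ℕ → X // r (ω 0) = x₀ ∧ ∀ k, r (ω (k + 1)) = ω k} (ℕ → X)
          (borel _) _ Subtype.val := by
        letI : MeasurableSpace {ω : ℕ → X // r (ω 0) = x₀ ∧ ∀ k, r (ω (k + 1)) = ω k} :=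
          borel _
        haveI : BorelSpace {ω : ℕ → X // r (ω 0) = x₀ ∧ ∀ k, r (ω (k + 1)) = ω k} := ⟨rfl⟩
        rw [measurable_pi_iff]
        intro k
        exact ((continuous_apply k).comp continuous_subtype_val).measurable
      exact hval.comap_le
    · rw [borel_eq_generateFrom_of_subbasis (topology_eq r x₀ hrc hfin)]
      apply MeasurableSpace.generateFrom_le
      rintro S hS
      simp only [cylSet, Set.mem_iUnion, Set.mem_image] at hS
      obtain ⟨k, y, hy, rfl⟩ := hS
      have hmeas : Measurable
          (fun ω : {ω : ℕ → X // r (ω 0) = x₀ ∧ ∀ k, r (ω (k + 1)) = ω k} => ω.1 k) :=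
        (measurable_pi_apply k).comp measurable_subtype_coe
      exact hmeas (measurableSet_singleton y)
  -- the coding map
  have hΦprop : ∀ t : ℝ, r ((fun k => (psi r D hfin x₀ (k + 1) t).1) 0) = x₀ ∧
      ∀ k, r ((fun k => (psi r D hfin x₀ (k + 1) t).1) (k + 1))
        = (fun k => (psi r D hfin x₀ (k + 1) t).1) k := by
    intro t
    constructor
    · have h := psi_fst_r r D hfin x₀ hsurj 0 t
      rw [psi_zero] at h
      exact h
    · intro k
      exact psi_fst_r r D hfin x₀ hsurj (k + 1) t
  set Φ : ℝ → {ω : ℕ → X // r (ω 0) = x₀ ∧ ∀ k, r (ω (k + 1)) = ω k} :=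
    fun t => ⟨fun k => (psi r D hfin x₀ (k + 1) t).1, hΦprop t⟩ with hΦ
  have hΦmeas : Measurable Φ := by
    apply Measurable.subtype_mk
    apply measurable_pi_lambda
    intro k
    exact measurable_fst.comp (psi_measurable r D hfin x₀ hDpos (k + 1))
  haveI hres : IsProbabilityMeasure (volume.restrict (Set.Ico (0:ℝ) 1)) := by
    constructor
    rw [Measure.restrict_apply_univ, Real.volume_Ico]
    simp
  haveI hPprob : IsProbabilityMeasure ((volume.restrict (Set.Ico (0:ℝ) 1)).map Φ) :=
    Measure.isProbabilityMeasure_map hΦmeas.aemeasurable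
  refine ⟨(volume.restrict (Set.Ico (0:ℝ) 1)).map Φ, inferInstance, hPprob, ?_⟩
  intro n hn g hgm _
  have hn1 : n - 1 + 1 = n := Nat.succ_pred_eq_of_pos hn
  have hInt1 : ∫ ω, g (ω.1 (n - 1)) ∂((volume.restrict (Set.Ico (0:ℝ) 1)).map Φ)
      = ∫ t, g ((Φ t).1 (n - 1)) ∂(volume.restrict (Set.Ico (0:ℝ) 1)) := by
    apply integral_map hΦmeas.aemeasurable
    exact (hgm.comp ((measurable_pi_apply (n - 1)).comp measurable_subtype_coe)).aestronglyMeasurable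
  have hΦn : ∀ t, g ((Φ t).1 (n - 1)) = g ((psi r D hfin x₀ n t).1) := by
    intro t
    have : (Φ t).1 (n - 1) = (psi r D hfin x₀ ((n - 1) + 1) t).1 := rfl
    rw [this, hn1]
  rw [hInt1]
  simp only [hΦn]
  set F := (fib_finite r hfin x₀ n).toFinset with hF
  set A : X → Set ℝ :=
    fun y => Set.Ico (0:ℝ) 1 ∩ (fun u => (psi r D hfin x₀ n u).1) ⁻¹' {y} with hA
  have hAmeas : ∀ y, MeasurableSet (A y) := fun y =>
    measurableSet_Ico.inter
      ((measurable_fst.comp (psi_measurable r D hfin x₀ hDpos n)) (measurableSet_singleton y))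
  have hAvol : ∀ y ∈ F, volume (A y) = ENNReal.ofReal (W r D n y) := by
    intro y hy
    rw [hF, Set.Finite.mem_toFinset] at hy
    exact psi_volume r D hfin x₀ hsurj hDpos hD1' n y hy
  have hpe : ∀ t ∈ Set.Ico (0:ℝ) 1,
      g ((psi r D hfin x₀ n t).1) = ∑ y ∈ F, (A y).indicator (fun _ => g y) t := by
    intro t ht
    have hmem : (psi r D hfin x₀ n t).1 ∈ F := by
      rw [hF, Set.Finite.mem_toFinset]
      exact psi_iter r D hfin x₀ hsurj n t
    rw [Finset.sum_eq_single_of_mem ((psi r D hfin x₀ n t).1) hmem]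
    · have hmem2 : t ∈ A ((psi r D hfin x₀ n t).1) := ⟨ht, rfl⟩
      rw [Set.indicator_of_mem hmem2]
    · intro y _ hne
      apply Set.indicator_of_notMem
      rintro ⟨_, hfst⟩
      exact hne ((Set.mem_singleton_iff.mp hfst).symm)
  have h2' : ∫ t, g ((psi r D hfin x₀ n t).1) ∂(volume.restrict (Set.Ico (0:ℝ) 1))
      = ∫ t, (∑ y ∈ F, (A y).indicator (fun _ => g y) t)
          ∂(volume.restrict (Set.Ico (0:ℝ) 1)) := by
    apply setIntegral_congr_fun measurableSet_Ico
    intro t ht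
    exact hpe t ht
  have h3 : ∫ t, (∑ y ∈ F, (A y).indicator (fun _ => g y) t)
        ∂(volume.restrict (Set.Ico (0:ℝ) 1))
      = ∑ y ∈ F, ∫ t, (A y).indicator (fun _ => g y) t
          ∂(volume.restrict (Set.Ico (0:ℝ) 1)) := by
    apply integral_finset_sum
    intro y _
    exact (integrable_const (g y)).indicator (hAmeas y)
  have h4 : ∀ y ∈ F, ∫ t, (A y).indicator (fun _ => g y) t
      ∂(volume.restrict (Set.Ico (0:ℝ) 1)) = W r D n y * g y := by
    intro y hy
    rw [integral_indicator_const (g y) (hAmeas y), measureReal_restrict_apply (hAmeas y)]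
    have hsub : A y ∩ Set.Ico (0:ℝ) 1 = A y := by
      apply Set.inter_eq_left.mpr
      rw [hA]
      exact Set.inter_subset_left
    rw [hsub, measureReal_def, hAvol y hy, ENNReal.toReal_ofReal (W_nonneg r D hDpos n y), smul_eq_mul]
  have h5 : ∑ᶠ y ∈ (r^[n]) ⁻¹' {x₀}, (∏ j ∈ Finset.range n, D (r^[j] y)) * g y
      = ∑ y ∈ F, (W r D n y) * g y := by
    rw [hF]
    exact finsum_mem_eq_finite_toFinset_sum _ (fib_finite r hfin x₀ n)
  rw [h2', h3, h5]
  exact Finset.sum_congr rfl h4
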